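/- arXiv:math/0510291 — 3 statements merged into one kernel-verified Lean document; each statement's English description precedes it below -/
import Mathlib

section
/- The set of positive definite integral binary quadratic forms [a,b,c] of discriminant -D = b^2 - 4ac, for a fixed positive integer D, decomposes into finitely many orbits under the action of SL_2(Z) (acting by change of variables). -/
open Matrix MatrixGroups

/-- The set of positive definite integral binary quadratic forms `[a,b,c]` of
discriminant `-D`, encoded as triples of coefficients. -/
def QD (D : ℕ) : Set (ℤ × ℤ × ℤ) :=
  {Q | 0 < Q.1 ∧ Q.2.1 ^ 2 - 4 * Q.1 * Q.2.2 = -(D : ℤ)}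

/-- The action of `γ ∈ SL₂(ℤ)` on a binary quadratic form `[a,b,c]` by change of
variables `(x,y) ↦ (x,y)·γ`, described on coefficients. -/
def formAction (γ : SL(2, ℤ)) (Q : ℤ × ℤ × ℤ) : ℤ × ℤ × ℤ :=
  let p := (γ : Matrix (Fin 2) (Fin 2) ℤ) 0 0
  let q := (γ : Matrix (Fin 2) (Fin 2) ℤ) 0 1
  let r := (γ : Matrix (Fin 2) (Fin 2) ℤ) 1 0
  let s := (γ : Matrix (Fin 2) (Fin 2) ℤ) 1 1
  let a := Q.1; let b := Q.2.1; let c := Q.2.2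
  (a * p ^ 2 + b * p * r + c * r ^ 2,
   2 * a * p * q + b * (p * s + q * r) + 2 * c * r * s,
   a * q ^ 2 + b * q * s + c * s ^ 2)

lemma formAction_one (Q : ℤ × ℤ × ℤ) : formAction 1 Q = Q := by
  simp [formAction]

lemma formAction_mul (γ δ : SL(2, ℤ)) (Q : ℤ × ℤ × ℤ) :
    formAction γ (formAction δ Q) = formAction (δ * γ) Q := by
  obtain ⟨a, b, c⟩ := Q
  simp only [formAction, Matrix.SpecialLinearGroup.coe_mul, Matrix.mul_apply,
    Fin.sum_univ_two, Prod.mk.injEq]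
  refine ⟨by ring, by ring, by ring⟩

lemma det_entries (γ : SL(2, ℤ)) :
    (γ : Matrix (Fin 2) (Fin 2) ℤ) 0 0 * (γ : Matrix (Fin 2) (Fin 2) ℤ) 1 1 -
    (γ : Matrix (Fin 2) (Fin 2) ℤ) 0 1 * (γ : Matrix (Fin 2) (Fin 2) ℤ) 1 0 = 1 := by
  have := γ.det_coe
  rwa [Matrix.det_fin_two] at this

lemma formAction_mem {D : ℕ} (hD : 0 < D) (γ : SL(2, ℤ)) {Q : ℤ × ℤ × ℤ} (hQ : Q ∈ QD D) :
    formAction γ Q ∈ QD D := by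
  obtain ⟨a, b, c⟩ := Q
  obtain ⟨ha, hdisc⟩ := hQ
  have hdet := det_entries γ
  set p := (γ : Matrix (Fin 2) (Fin 2) ℤ) 0 0
  set q := (γ : Matrix (Fin 2) (Fin 2) ℤ) 0 1
  set r := (γ : Matrix (Fin 2) (Fin 2) ℤ) 1 0
  set s := (γ : Matrix (Fin 2) (Fin 2) ℤ) 1 1
  simp only [QD, Set.mem_setOf_eq] at ha hdisc ⊢
  constructor
  · show 0 < a * p ^ 2 + b * p * r + c * r ^ 2
    rcases eq_or_ne r 0 with hr | hr
    · have hp : p ≠ 0 := by rintro hp; rw [hp, hr] at hdet; simp at hdet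
      have h2 : 0 < p ^ 2 := by positivity
      rw [hr]
      nlinarith [mul_pos ha h2]
    · have hr2 : 0 < r ^ 2 := by positivity
      have hDpos : (0:ℤ) < D := by exact_mod_cast hD
      have key : 4 * a * (a * p ^ 2 + b * p * r + c * r ^ 2)
          = (2 * a * p + b * r) ^ 2 + D * r ^ 2 := by nlinarith [sq_nonneg (2*a*p + b*r)]
      nlinarith [sq_nonneg (2*a*p + b*r)]
  · show (2 * a * p * q + b * (p * s + q * r) + 2 * c * r * s) ^ 2 -
      4 * (a * p ^ 2 + b * p * r + c * r ^ 2) * (a * q ^ 2 + b * q * s + c * s ^ 2) = -(D:ℤ)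
    have : (2 * a * p * q + b * (p * s + q * r) + 2 * c * r * s) ^ 2 -
        4 * (a * p ^ 2 + b * p * r + c * r ^ 2) * (a * q ^ 2 + b * q * s + c * s ^ 2)
        = (b ^ 2 - 4 * a * c) * (p * s - q * r) ^ 2 := by ring
    rw [this, hdet]; rw [← hdisc]; ring

def Tm (t : ℤ) : SL(2, ℤ) := ⟨!![1, t; 0, 1], by simp [Matrix.det_fin_two_of]⟩

def Sm : SL(2, ℤ) := ⟨!![0, -1; 1, 0], by simp [Matrix.det_fin_two_of]⟩

lemma formAction_Tm (t a b c : ℤ) :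
    formAction (Tm t) (a, b, c) = (a, 2 * a * t + b, a * t ^ 2 + b * t + c) := by
  simp only [formAction, Tm]
  norm_num [Matrix.cons_val_zero, Matrix.cons_val_one, Matrix.head_cons]

lemma formAction_Sm (a b c : ℤ) : formAction Sm (a, b, c) = (c, -b, a) := by
  simp [formAction, Sm]

lemma reduce {D : ℕ} (hD : 0 < D) :
    ∀ n : ℕ, ∀ Q ∈ QD D, Q.1.toNat ≤ n →
      ∃ γ : SL(2, ℤ), |(formAction γ Q).2.1| ≤ (formAction γ Q).1 ∧
        (formAction γ Q).1 ≤ (formAction γ Q).2.2 := by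
  intro n
  induction n with
  | zero =>
    rintro ⟨a, b, c⟩ ⟨ha, -⟩ hle
    simp only at ha hle
    omega
  | succ n ih =>
    rintro ⟨a, b, c⟩ ⟨ha, hdisc⟩ hle
    simp only at ha hdisc hle
    have h2a : (0:ℤ) < 2 * a := by linarith
    obtain ⟨t, hbt⟩ : ∃ t : ℤ, |2 * a * t + b| ≤ a := by
      set t0 := -(b / (2 * a)) with ht0
      have hb1 : 2 * a * t0 + b = b % (2 * a) := by rw [Int.emod_def]; ring
      have h0 : 0 ≤ b % (2 * a) := Int.emod_nonneg b (by omega)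
      have hlt : b % (2 * a) < 2 * a := Int.emod_lt_of_pos b h2a
      rcases le_or_gt (b % (2 * a)) a with h | h
      · exact ⟨t0, by rw [hb1, abs_le]; omega⟩
      · refine ⟨t0 - 1, ?_⟩
        have h2 : 2 * a * (t0 - 1) + b = b % (2 * a) - 2 * a := by rw [← hb1]; ring
        rw [h2, abs_le]; omega
    have hQ1eq : formAction (Tm t) (a, b, c) = (a, 2 * a * t + b, a * t ^ 2 + b * t + c) :=
      formAction_Tm t a b c
    have hQ1 : formAction (Tm t) (a, b, c) ∈ QD D := formAction_mem hD _ ⟨ha, hdisc⟩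
    rw [hQ1eq] at hQ1
    obtain ⟨-, hdisc1⟩ := hQ1
    simp only at hdisc1
    set c1 := a * t ^ 2 + b * t + c with hc1
    have hc1pos : 0 < c1 := by nlinarith [sq_nonneg (2 * a * t + b), hD]
    rcases le_or_gt a c1 with hac | hac
    · exact ⟨Tm t, by rw [hQ1eq]; exact ⟨hbt, hac⟩⟩
    · have hQ2eq : formAction Sm (formAction (Tm t) (a, b, c)) = (c1, -(2 * a * t + b), a) := by
        rw [hQ1eq]; exact formAction_Sm _ _ _
      have hQ2 : formAction Sm (formAction (Tm t) (a, b, c)) ∈ QD D :=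
        formAction_mem hD _ (formAction_mem hD _ ⟨ha, hdisc⟩)
      rw [hQ2eq] at hQ2
      have hle2 : ((c1, -(2 * a * t + b), a) : ℤ × ℤ × ℤ).1.toNat ≤ n := by
        simp only; omega
      obtain ⟨γ', hγ'⟩ := ih _ hQ2 hle2
      refine ⟨Tm t * Sm * γ', ?_⟩
      have key : formAction (Tm t * Sm * γ') (a, b, c)
          = formAction γ' ((c1, -(2 * a * t + b), a) : ℤ × ℤ × ℤ) := by
        rw [← hQ2eq, formAction_mul, formAction_mul, mul_assoc]
      rw [key]; exact hγ'

lemma red_bounds {D : ℕ} (hD : 0 < D) {a b c : ℤ} (h : (a, b, c) ∈ QD D)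
    (h1 : |b| ≤ a) (h2 : a ≤ c) :
    1 ≤ a ∧ a ≤ D ∧ -(D:ℤ) ≤ b ∧ b ≤ (D:ℤ) ∧ 1 ≤ c ∧ c ≤ D := by
  obtain ⟨ha, hdisc⟩ := h
  simp only at ha hdisc
  rw [abs_le] at h1
  have hDpos : (0:ℤ) < D := by exact_mod_cast hD
  have hb2 : b ^ 2 ≤ a ^ 2 := by nlinarith
  have h3a : 3 * a ^ 2 ≤ (D:ℤ) := by nlinarith
  have haD : a ≤ (D:ℤ) := by nlinarith
  refine ⟨ha, haD, by linarith, by linarith, by nlinarith, by nlinarith⟩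

/-- For every positive integer `D`, the set `Q_D` of positive definite integral binary
quadratic forms of discriminant `-D` decomposes into finitely many `SL₂(ℤ)`-orbits:
there is a finite set of representatives meeting every orbit. -/
theorem finitely_many_orbits (D : ℕ) (hD : 0 < D) :
    ∃ S : Finset (ℤ × ℤ × ℤ), (↑S : Set (ℤ × ℤ × ℤ)) ⊆ QD D ∧
      ∀ Q ∈ QD D, ∃ Q' ∈ S, ∃ γ : SL(2, ℤ), formAction γ Q' = Q := by
  classical
  refine ⟨((Finset.Icc (1:ℤ) D) ×ˢ (Finset.Icc (-(D:ℤ)) D) ×ˢ (Finset.Icc (1:ℤ) D)).filter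
    (fun Q => 0 < Q.1 ∧ Q.2.1 ^ 2 - 4 * Q.1 * Q.2.2 = -(D : ℤ)), ?_, ?_⟩
  · intro Q hQ
    simp only [Finset.coe_filter, Set.mem_setOf_eq] at hQ
    exact ⟨hQ.2.1, hQ.2.2⟩
  · intro Q hQ
    obtain ⟨γ, hred1, hred2⟩ := reduce hD Q.1.toNat Q hQ le_rfl
    have hR : formAction γ Q ∈ QD D := formAction_mem hD γ hQ
    have hR' : ((formAction γ Q).1, (formAction γ Q).2.1, (formAction γ Q).2.2) ∈ QD D := hR
    obtain ⟨hA, hB, hC, hDd, hE, hF⟩ := red_bounds hD hR' hred1 hred2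
    refine ⟨formAction γ Q, ?_, γ⁻¹, ?_⟩
    · rw [Finset.mem_filter, Finset.mem_product]
      refine ⟨⟨?_, ?_⟩, hR.1, hR.2⟩
      · rw [Finset.mem_Icc]; exact ⟨hA, hB⟩
      · rw [Finset.mem_product, Finset.mem_Icc, Finset.mem_Icc]
        exact ⟨⟨hC, hDd⟩, hE, hF⟩
    · rw [formAction_mul, mul_inv_cancel, formAction_one]
end

section
/- The group SL_2(ℤ), acting by conjugation on the trace-zero matrices, maps the lattice L = { [[b, c],[a, -b]] : a,b,c ∈ ℤ } to itself and acts trivially on the discriminant group L^#/L ≅ ℤ/2ℤ. -/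
open Matrix MatrixGroups

/-- The lattice `L = { [[b, c],[a, -b]] : a,b,c ∈ ℤ }`. -/
def Lset : Set (Matrix (Fin 2) (Fin 2) ℚ) :=
  {X | ∃ a b c : ℤ, X = !![(b : ℚ), c; a, -b]}

/-- The dual lattice `L^# = { [[b/2, c],[a, -b/2]] : a,b,c ∈ ℤ }` of `L` with respect
to `(X,Y) = -tr(XY)`. -/
def LdualSet : Set (Matrix (Fin 2) (Fin 2) ℚ) :=
  {Y | ∃ a b c : ℤ, Y = !![(b : ℚ) / 2, c; a, -(b : ℚ) / 2]}

/-- The conjugation action of `g ∈ SL₂(ℤ)` on rational `2 × 2` matrices. -/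
def conjAct (g : SL(2, ℤ)) (X : Matrix (Fin 2) (Fin 2) ℚ) : Matrix (Fin 2) (Fin 2) ℚ :=
  ((g : Matrix (Fin 2) (Fin 2) ℤ).map (Int.cast : ℤ → ℚ)) * X *
    (((g⁻¹ : SL(2, ℤ)) : Matrix (Fin 2) (Fin 2) ℤ).map (Int.cast : ℤ → ℚ))

lemma conjAct_eq (g : SL(2,ℤ)) (p q r : ℚ) :
    conjAct g !![p, q; r, -p] =
    !![((g.1 0 0 : ℚ)*(g.1 1 1 : ℚ) + (g.1 0 1 : ℚ)*(g.1 1 0 : ℚ))*p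
        - (g.1 0 0 : ℚ)*(g.1 1 0 : ℚ)*q + (g.1 0 1 : ℚ)*(g.1 1 1 : ℚ)*r,
       (g.1 0 0 : ℚ)^2*q - 2*(g.1 0 0 : ℚ)*(g.1 0 1 : ℚ)*p - (g.1 0 1 : ℚ)^2*r;
       (g.1 1 1 : ℚ)^2*r + 2*(g.1 1 0 : ℚ)*(g.1 1 1 : ℚ)*p - (g.1 1 0 : ℚ)^2*q,
       -(((g.1 0 0 : ℚ)*(g.1 1 1 : ℚ) + (g.1 0 1 : ℚ)*(g.1 1 0 : ℚ))*p
        - (g.1 0 0 : ℚ)*(g.1 1 0 : ℚ)*q + (g.1 0 1 : ℚ)*(g.1 1 1 : ℚ)*r)] := by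
  have hinv : ((g⁻¹ : SL(2,ℤ)) : Matrix (Fin 2) (Fin 2) ℤ) =
      !![g.1 1 1, -g.1 0 1; -g.1 1 0, g.1 0 0] := by
    rw [Matrix.SpecialLinearGroup.SL2_inv_expl]; rfl
  rw [conjAct, hinv]
  ext i j
  fin_cases i <;> fin_cases j <;>
    simp [Matrix.mul_apply, Fin.sum_univ_two, Matrix.map_apply] <;> ring

/-- `SL₂(ℤ)`, acting by conjugation, maps the lattice
`L = { [[b, c],[a, -b]] : a,b,c ∈ ℤ }` to itself, maps the dual lattice `L^#` to
itself, and acts trivially on the discriminant group `L^#/L ≅ ℤ/2ℤ`: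
`g.Y - Y ∈ L` for all `Y ∈ L^#`. -/
theorem SL2Z_preserves_L_acts_trivially_on_discriminant (g : SL(2, ℤ)) :
    (∀ X ∈ Lset, conjAct g X ∈ Lset) ∧
    (∀ Y ∈ LdualSet, conjAct g Y ∈ LdualSet) ∧
    (∀ Y ∈ LdualSet, conjAct g Y - Y ∈ Lset) := by
  set a := g.1 0 0; set b := g.1 0 1; set c := g.1 1 0; set d := g.1 1 1
  have hdet : a * d - b * c = 1 := by
    have := g.2; rw [Matrix.det_fin_two] at this; exact this
  have hdetQ : (a : ℚ) * d - b * c = 1 := by exact_mod_cast congrArg (Int.cast : ℤ → ℚ) hdet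
  refine ⟨?_, ?_, ?_⟩
  · rintro X ⟨A, B, C, rfl⟩
    refine ⟨d^2*A + 2*c*d*B - c^2*C, (a*d + b*c)*B - a*c*C + b*d*A,
      a^2*C - 2*a*b*B - b^2*A, ?_⟩
    rw [conjAct_eq]
    simp only [a, b, c, d]
    push_cast
    ring_nf
  · rintro Y ⟨A, B, C, rfl⟩
    have h : !![(B : ℚ)/2, C; A, -(B:ℚ)/2] = !![(B : ℚ)/2, C; A, -((B:ℚ)/2)] := by
      rw [neg_div]
    rw [h, conjAct_eq]
    refine ⟨d^2*A + c*d*B - c^2*C, (a*d + b*c)*B + 2*b*d*A - 2*a*c*C,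
      a^2*C - a*b*B - b^2*A, ?_⟩
    push_cast
    ext i j
    fin_cases i <;> fin_cases j <;> simp <;> ring
  · rintro Y ⟨A, B, C, rfl⟩
    have h : !![(B : ℚ)/2, C; A, -(B:ℚ)/2] = !![(B : ℚ)/2, C; A, -((B:ℚ)/2)] := by
      rw [neg_div]
    rw [h, conjAct_eq]
    refine ⟨d^2*A + c*d*B - c^2*C - A, b*c*B + b*d*A - a*c*C,
      a^2*C - a*b*B - b^2*A - C, ?_⟩
    push_cast
    ext i j
    fin_cases i <;> fin_cases j <;> simp <;>
      first
      | linear_combination (-(B:ℚ)/2) * hdetQ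
      | linear_combination (-(B:ℚ)) * hdetQ
      | linear_combination ((B:ℚ)/2) * hdetQ
      | linear_combination (B:ℚ) * hdetQ
      | ring
end

section
/- Every point z in the upper half plane is SL_2(ℤ)-equivalent to a point in the standard fundamental domain F = { z : -1/2 ≤ Re(z) < 1/2, |z| > 1 } ∪ { z : -1/2 ≤ Re(z) ≤ 0, |z| = 1 }, and no two distinct points of F are SL_2(ℤ)-equivalent. -/
open Matrix MatrixGroups UpperHalfPlane Complex

/-- The standard (strict) fundamental domain for `SL₂(ℤ)` acting on the upper half
plane: `{ z : -1/2 ≤ Re z < 1/2, |z| > 1 } ∪ { z : -1/2 ≤ Re z ≤ 0, |z| = 1 }`. -/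
def stdFundDomain : Set ℍ :=
  {z | (-(1 / 2 : ℝ) ≤ z.re ∧ z.re < 1 / 2 ∧ 1 < ‖(z : ℂ)‖) ∨
       (-(1 / 2 : ℝ) ≤ z.re ∧ z.re ≤ 0 ∧ ‖(z : ℂ)‖ = 1)}

/-- Conditions characterizing membership in the fundamental domain, over `ℂ`. -/
def condF (z : ℂ) : Prop :=
  -(1/2 : ℝ) ≤ z.re ∧ z.re < 1/2 ∧ 1 ≤ normSq z ∧ (normSq z = 1 → z.re ≤ 0)

set_option maxHeartbeats 1000000 in
lemma core1 (a b d : ℤ) (z w : ℂ) (hdet : a * d - b = 1)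
    (hzim : 0 < z.im) (hwim : 0 < w.im)
    (hzF : condF z) (hwF : condF w)
    (heq : w * (z + (d:ℂ)) = (a:ℂ) * z + (b:ℂ))
    (hns : normSq (z + (d:ℂ)) ≤ 1) : z = w := by
  obtain ⟨hz1, hz2, hz3, hz4⟩ := hzF
  obtain ⟨hw1, hw2, hw3, hw4⟩ := hwF
  have hnz : z.re^2 + z.im^2 = normSq z := by rw [normSq_apply]; ring
  have hnw : w.re^2 + w.im^2 = normSq w := by rw [normSq_apply]; ring
  have hzr2 : z.re^2 ≤ 1/4 := by nlinarith
  have hzi2 : 3/4 ≤ z.im^2 := by nlinarith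
  have hnsd : (z.re + d)^2 + z.im^2 ≤ 1 := by
    rw [normSq_apply] at hns
    simp only [Complex.add_re, Complex.add_im, Complex.intCast_re, Complex.intCast_im,
      add_zero] at hns
    nlinarith [hns]
  have hd2 : (z.re + (d:ℝ))^2 ≤ 1/4 := by nlinarith
  have hdlb : (-1 : ℤ) ≤ d := by
    by_contra h
    push_neg at h
    have : (d : ℝ) ≤ -2 := by exact_mod_cast (by omega : d ≤ -2)
    nlinarith
  have hdub : d ≤ 1 := by
    by_contra h
    push_neg at h
    have : (2 : ℝ) ≤ (d:ℝ) := by exact_mod_cast h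
    nlinarith
  have hre := congrArg Complex.re heq
  have him := congrArg Complex.im heq
  simp only [Complex.mul_re, Complex.mul_im, Complex.add_re, Complex.add_im,
    Complex.intCast_re, Complex.intCast_im, add_zero, mul_zero, zero_mul, sub_zero,
    zero_add] at hre him
  interval_cases d
  · exfalso; push_cast at hd2; nlinarith
  · -- d = 0
    push_cast at hre him hd2 hnsd
    have hb : b = -1 := by omega
    subst hb
    have hzn1 : normSq z = 1 := le_antisymm (by nlinarith) hz3
    have hzre0 : z.re ≤ 0 := hz4 hzn1
    rw [hzn1] at hnz
    push_cast at hre him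
    -- solve for w
    have hwre : w.re = a - z.re := by
      have h1 : w.re * (z.re^2 + z.im^2) = (a - z.re) * (z.re^2 + z.im^2) := by
        nlinarith [hre, him]
      have : z.re^2 + z.im^2 > 0 := by nlinarith
      have := mul_right_cancel₀ (ne_of_gt this) h1
      linarith [this]
    have hwim : w.im = z.im := by
      have h1 : w.im * (z.re^2 + z.im^2) = z.im * (z.re^2 + z.im^2) := by
        nlinarith [hre, him]
      have hp : z.re^2 + z.im^2 > 0 := by nlinarith
      exact mul_right_cancel₀ (ne_of_gt hp) h1
    -- bound a
    have halb : (-1 : ℤ) ≤ a := by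
      by_contra h
      push_neg at h
      have : (a : ℝ) ≤ -2 := by exact_mod_cast (by omega : a ≤ -2)
      rw [hwre] at hw1
      nlinarith
    have haub : a ≤ 0 := by
      by_contra h
      push_neg at h
      have : (1 : ℝ) ≤ (a:ℝ) := by exact_mod_cast h
      rw [hwre] at hw2
      nlinarith
    interval_cases a
    · -- a = -1 : forces z.re = -1/2
      push_cast at hwre
      have hzre : z.re = -(1/2) := by rw [hwre] at hw1; linarith
      apply Complex.ext
      · rw [hwre, hzre]; norm_num
      · exact hwim.symm
    · -- a = 0
      push_cast at hwre
      have hwn1 : normSq w = 1 := by rw [← hnw, hwre, hwim]; nlinarith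
      have := hw4 hwn1
      have : z.re = 0 := by rw [hwre] at this; linarith
      apply Complex.ext
      · rw [hwre, this]; norm_num
      · exact hwim.symm
  · -- d = 1
    have hb : b = a - 1 := by omega
    subst hb
    push_cast at hre him
    norm_num at hd2 hnsd
    have hzre : z.re = -(1/2) := by nlinarith
    have hzi : z.im^2 = 3/4 := by nlinarith
    rw [hzre] at hre him
    have hwre : w.re = a - 1/2 := by nlinarith [hre, him, hzi]
    have hwim2 : w.im = z.im := by nlinarith [hre, him, hzi]
    have ha0 : a = 0 := by
      have h1 : (0:ℝ) ≤ (a:ℝ) := by rw [hwre] at hw1; linarith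
      have h2 : (a:ℝ) < 1 := by rw [hwre] at hw2; linarith
      have h1' : 0 ≤ a := by exact_mod_cast h1
      have h2' : a < 1 := by exact_mod_cast h2
      omega
    subst ha0
    push_cast at hwre
    apply Complex.ext
    · rw [hwre, hzre]; norm_num
    · exact hwim2.symm

set_option maxHeartbeats 1000000 in
lemma core (a b c d : ℤ) (z w : ℂ) (hdet : a * d - b * c = 1)
    (hzim : 0 < z.im) (hwim : 0 < w.im)
    (hzF : condF z) (hwF : condF w)
    (heq : w * ((c:ℂ) * z + (d:ℂ)) = (a:ℂ) * z + (b:ℂ))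
    (hns : normSq ((c:ℂ) * z + (d:ℂ)) ≤ 1) : z = w := by
  obtain ⟨hz1, hz2, hz3, hz4⟩ := hzF
  have hnz : z.re^2 + z.im^2 = normSq z := by rw [normSq_apply]; ring
  have hzr2 : z.re^2 ≤ 1/4 := by nlinarith
  have hzi2 : 3/4 ≤ z.im^2 := by nlinarith
  have hnsd : ((c:ℝ) * z.re + d)^2 + (c:ℝ)^2 * z.im^2 ≤ 1 := by
    rw [normSq_apply] at hns
    simp only [Complex.add_re, Complex.add_im, Complex.mul_re, Complex.mul_im,
      Complex.intCast_re, Complex.intCast_im, add_zero, mul_zero, zero_mul, sub_zero,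
      zero_add] at hns
    nlinarith [hns]
  have hclb : (-1 : ℤ) ≤ c := by
    by_contra h
    push_neg at h
    have : (c : ℝ) ≤ -2 := by exact_mod_cast (by omega : c ≤ -2)
    nlinarith
  have hcub : c ≤ 1 := by
    by_contra h
    push_neg at h
    have : (2 : ℝ) ≤ (c:ℝ) := by exact_mod_cast h
    nlinarith
  obtain ⟨hw1, hw2, hw3, hw4⟩ := hwF
  interval_cases c
  · -- c = -1 : reduce to core1 with (-a, -b, -d)
    refine core1 (-a) (-b) (-d) z w (by linear_combination hdet) hzim hwim
      ⟨hz1, hz2, hz3, hz4⟩ ⟨hw1, hw2, hw3, hw4⟩ ?_ ?_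
    · push_cast at heq ⊢; linear_combination -heq
    · push_cast at hns ⊢
      calc normSq (z + -(d:ℂ)) = normSq (-(-1 * z + (d:ℂ))) := by ring_nf
        _ ≤ 1 := by rw [normSq_neg]; exact hns
  · -- c = 0
    have had : a * d = 1 := by omega
    have hre := congrArg Complex.re heq
    have him := congrArg Complex.im heq
    simp only [Complex.mul_re, Complex.mul_im, Complex.add_re, Complex.add_im,
      Complex.intCast_re, Complex.intCast_im, Int.cast_zero, add_zero, mul_zero, zero_mul,
      sub_zero, zero_add] at hre him
    rcases Int.mul_eq_one_iff_eq_one_or_neg_one.mp had with ⟨ha, hd⟩ | ⟨ha, hd⟩ <;>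
      subst ha <;> subst hd <;> push_cast at hre him <;> norm_num at hre him
    · -- w.re = z.re + b, w.im = z.im
      have hb : b = 0 := by
        have h1 : -1 < (b:ℝ) := by nlinarith
        have h2 : (b:ℝ) < 1 := by nlinarith
        have h1' : -1 < b := by exact_mod_cast h1
        have h2' : b < 1 := by exact_mod_cast h2
        omega
      subst hb
      norm_num at hre
      exact Complex.ext hre.symm him.symm
    · -- -w.re = -z.re + b, -w.im = -z.im
      have hb : b = 0 := by
        have h1 : -1 < (b:ℝ) := by nlinarith
        have h2 : (b:ℝ) < 1 := by nlinarith
        have h1' : -1 < b := by exact_mod_cast h1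
        have h2' : b < 1 := by exact_mod_cast h2
        omega
      subst hb
      norm_num at hre him
      exact Complex.ext (by linarith) (by linarith)
  · -- c = 1
    refine core1 a b d z w (by linear_combination hdet) hzim hwim ⟨hz1, hz2, hz3, hz4⟩ ⟨hw1, hw2, hw3, hw4⟩ ?_ ?_
    · push_cast at heq ⊢; linear_combination heq
    · push_cast at hns ⊢; convert hns using 2; ring

lemma condF_of_mem {z : ℍ} (hz : z ∈ stdFundDomain) : condF (z : ℂ) := by
  have hsq := Complex.sq_norm (z : ℂ)
  have hnn := norm_nonneg (z : ℂ)
  have hre : ((z:ℂ)).re = z.re := rfl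
  rw [condF, hre]
  rcases hz with ⟨h1, h2, h3⟩ | ⟨h1, h2, h3⟩
  · exact ⟨h1, h2, by nlinarith, fun h => by nlinarith⟩
  · refine ⟨h1, by linarith, by nlinarith, fun _ => h2⟩


lemma exists_smul_mem_stdFundDomain (z : ℍ) : ∃ g : SL(2, ℤ), g • z ∈ stdFundDomain := by
  obtain ⟨g, hg⟩ := ModularGroup.exists_smul_mem_fd z
  obtain ⟨hn, hr⟩ := hg
  set w := g • z with hwdef
  rw [abs_le] at hr
  have hsq := Complex.sq_norm (w : ℂ)
  have hnn := norm_nonneg (w : ℂ)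
  have hre : ((w : ℂ)).re = w.re := rfl
  rcases eq_or_lt_of_le hn with hn1 | hn1
  · -- normSq w = 1, so |w| = 1
    have habs : ‖(w : ℂ)‖ = 1 := by
      rw [Complex.norm_def, ← hn1, Real.sqrt_one]
    rcases le_or_gt w.re 0 with h0 | h0
    · exact ⟨g, Or.inr ⟨hr.1, h0, habs⟩⟩
    · -- apply S
      refine ⟨ModularGroup.S * g, ?_⟩
      rw [mul_smul, ← hwdef, UpperHalfPlane.modular_S_smul]
      have hcoe : ((UpperHalfPlane.mk (-(w:ℂ))⁻¹ w.im_inv_neg_coe_pos : ℍ) : ℂ) = (-(w:ℂ))⁻¹ := rfl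
      have hrenew : ((-(w:ℂ))⁻¹).re = -w.re := by
        rw [Complex.inv_re]
        simp only [Complex.neg_re, Complex.normSq_neg]
        rw [← hn1, hre]
        ring
      have habsnew : ‖(-(w:ℂ))⁻¹‖ = 1 := by
        rw [norm_inv, norm_neg, habs]; norm_num
      right
      refine ⟨?_, ?_, ?_⟩
      · show -(1/2 : ℝ) ≤ ((-(w:ℂ))⁻¹).re
        rw [hrenew]; linarith [hr.2]
      · show ((-(w:ℂ))⁻¹).re ≤ 0
        rw [hrenew]; linarith
      · exact habsnew
  · -- 1 < normSq w, so 1 < |w|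
    have habs : 1 < ‖(w : ℂ)‖ := by nlinarith
    rcases lt_or_eq_of_le hr.2 with h2 | h2
    · exact ⟨g, Or.inl ⟨hr.1, h2, habs⟩⟩
    · -- w.re = 1/2 : apply T⁻¹
      refine ⟨ModularGroup.T ^ (-1 : ℤ) * g, ?_⟩
      rw [mul_smul, ← hwdef, UpperHalfPlane.modular_T_zpow_smul]
      have hcoe : (((((-1 : ℤ) : ℝ)) +ᵥ w : ℍ) : ℂ) = -1 + (w : ℂ) := by
        push_cast
        simp [UpperHalfPlane.coe_vadd]
      left
      have hresv : ((((-1 : ℤ) : ℝ)) +ᵥ w : ℍ).re = -1 + w.re := by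
        show ((((((-1 : ℤ) : ℝ)) +ᵥ w : ℍ)) : ℂ).re = -1 + w.re
        rw [hcoe]; simp [hre]
      refine ⟨?_, ?_, ?_⟩
      · rw [hresv, ← h2]; linarith
      · rw [hresv, ← h2]; linarith
      · show 1 < ‖((((((-1 : ℤ) : ℝ)) +ᵥ w : ℍ)) : ℂ)‖
        rw [hcoe]
        have h3 : normSq (-1 + (w:ℂ)) = normSq (w:ℂ) - 2 * w.re + 1 := by
          rw [normSq_apply, normSq_apply]
          simp [hre]
          ring
        have h4 : 1 < normSq (-1 + (w:ℂ)) := by rw [h3]; linarith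
        have h5 := Complex.sq_norm (-1 + (w:ℂ))
        nlinarith [norm_nonneg (-1 + (w:ℂ))]

lemma uniq_aux {z w : ℍ} (hz : z ∈ stdFundDomain) (hw : w ∈ stdFundDomain)
    (g : SL(2, ℤ)) (hg : g • z = w) (him : z.im ≤ w.im) : z = w := by
  set a : ℤ := (↑g : Matrix (Fin 2) (Fin 2) ℤ) 0 0 with ha
  set b : ℤ := (↑g : Matrix (Fin 2) (Fin 2) ℤ) 0 1 with hb
  set c : ℤ := (↑g : Matrix (Fin 2) (Fin 2) ℤ) 1 0 with hc
  set d : ℤ := (↑g : Matrix (Fin 2) (Fin 2) ℤ) 1 1 with hd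
  have hdet : a * d - b * c = 1 := by
    have := g.det_coe
    rw [Matrix.det_fin_two] at this
    linarith [this]
  -- denominator nonzero
  have hden : ((c : ℂ) * z + d) ≠ 0 := by
    have h0 := UpperHalfPlane.denom_ne_zero (g : GL (Fin 2) ℝ) z
    rwa [ModularGroup.denom_apply] at h0
  -- complex equation
  have hco : (w : ℂ) * ((c:ℂ) * z + d) = (a:ℂ) * z + b := by
    have h1 := congrArg (UpperHalfPlane.coe) (UpperHalfPlane.specialLinearGroup_apply g z)
    simp only [UpperHalfPlane.coe_mk] at h1
    rw [hg] at h1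
    have h2 : (w : ℂ) = ((a:ℂ) * z + b) / ((c:ℂ) * z + d) := by
      rw [h1]
      push_cast [algebraMap_int_eq, UpperHalfPlane.coe_mk]
      rfl
    rw [h2, div_mul_cancel₀ _ hden]
  -- normSq bound
  have hns : normSq ((c:ℂ) * z + d) ≤ 1 := by
    have h1 := ModularGroup.im_smul_eq_div_normSq g z
    rw [hg, ModularGroup.denom_apply] at h1
    have hp : 0 < normSq ((c:ℂ) * z + d) := by
      rw [← ModularGroup.denom_apply]; exact UpperHalfPlane.normSq_denom_pos _ z.im_pos.ne'
    rw [h1, le_div_iff₀ hp] at him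
    nlinarith [z.im_pos]
  have hz' := condF_of_mem hz
  have hw' := condF_of_mem hw
  exact UpperHalfPlane.ext (core a b c d z w hdet z.im_pos w.im_pos hz' hw' hco hns)


/-- Every point of the upper half plane is `SL₂(ℤ)`-equivalent to a point of the
standard fundamental domain `F`, and no two distinct points of `F` are
`SL₂(ℤ)`-equivalent. -/
theorem fundamental_domain_exists_unique :
    (∀ z : ℍ, ∃ g : SL(2, ℤ), g • z ∈ stdFundDomain) ∧
    (∀ z ∈ stdFundDomain, ∀ w ∈ stdFundDomain, (∃ g : SL(2, ℤ), g • z = w) → z = w) := by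
  refine ⟨exists_smul_mem_stdFundDomain, ?_⟩
  rintro z hz w hw ⟨g, hg⟩
  rcases le_total z.im w.im with h | h
  · exact uniq_aux hz hw g hg h
  · have hg' : g⁻¹ • w = z := by rw [← hg, inv_smul_smul]
    exact (uniq_aux hw hz g⁻¹ hg' h).symm
end
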